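/- Let φ be a NAE-3SAT instance and G the full bus graph constructed from φ (variable boxes, (I,O)-chains, and clause connectors c_q adjacent to the three chain-output buses O_{q,1}, O_{q,2}, O_{q,3}). If G admits a valid Boolean orientation assignment of its buses (every connector adjacent to at most two buses of each orientation), then the assignment σ defined by σ(x_i) = true iff the literal bus X_i is oriented vertically is a not-all-equal satisfying assignment for φ. -/

import Mathlib

def ValidConn {α : Type} [DecidableEq α] (o : α → Bool) (S : Finset α) : Prop :=
  ∀ v : Bool, (S.filter fun b => o b = v).card ≤ 2

/-- Connector neighborhoods inside each variable box, on its 13 buses: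
A = Xᵢ = 0, A' = 1, B = X̄ᵢ = 2, B' = 3, C = 4, R_A = 5, S_A = 6, T_A = 7,
U_A = 8, R_B = 9, S_B = 10, T_B = 11, U_B = 12. -/
def boxConns : List (Finset (Fin 13)) :=
  [{0,1,2,3}, {0,1,2,4}, {0,1,3,4},
   {0,5,6,8}, {0,5,7,8}, {0,6,7,8},
   {2,9,10,12}, {2,9,11,12}, {2,10,11,12}]

/-- Connector neighborhoods inside each (I,O)-chain, on its 20 buses:
I = 2, I₁ = 7, I₂ = 12, I₃ = 15, O = 17 (each flipper contributes a perp plus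
its output connector). -/
def chainConns : List (Finset (Fin 20)) :=
  [{0,1,2,3}, {0,1,2,4}, {0,1,3,4}, {2,3,7},
   {5,6,7,8}, {5,6,7,9}, {5,6,8,9}, {7,8,12},
   {10,11,12,13}, {10,11,12,14}, {10,11,13,14}, {12,13,15},
   {15,16,17,18}, {15,16,17,19}, {15,16,18,19}]

/-- Soundness of the NAE-3SAT reduction at the orientation level. The bus graph
built from a NAE-3SAT instance has buses (i, j) for the variable box of
variable i, and (q, μ, j) for the (I,O)-chain of the μ-th literal of clause q.
Besides the internal connectors of boxes and chains, there is, for each clause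
q and slot μ with literal (i, pol), an occurrence connector adjacent to
{R, S, I} where R, S are the flipper buses on the corresponding side of the
variable box of i and I is the input bus of the chain (q,μ); and a clause
connector c_q adjacent to the three chain output buses O_{q,1}, O_{q,2},
O_{q,3}. If the buses admit a valid orientation assignment (every connector
adjacent to at most two buses of each orientation, with true = vertical), then
σ(xᵢ) := (Xᵢ is vertical) is a not-all-equal satisfying assignment for the
instance: every clause has a true literal and a false literal. -/
lemma three_ne {α : Type} [DecidableEq α] {o : α → Bool} {S : Finset α} {x y z : α}
    (hx : x ∈ S) (hy : y ∈ S) (hz : z ∈ S)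
    (hxy : x ≠ y) (hxz : x ≠ z) (hyz : y ≠ z)
    (h : ValidConn o S) : ¬(o x = o y ∧ o x = o z) := by
  rintro ⟨h1, h2⟩
  have hsub : ({x, y, z} : Finset α) ⊆ S.filter (fun b => o b = o x) := by
    intro w hw
    simp only [Finset.mem_insert, Finset.mem_singleton] at hw
    rcases hw with rfl | rfl | rfl <;>
      simp [Finset.mem_filter, hx, hy, hz, h1.symm, h2.symm]
  have hcard : ({x, y, z} : Finset α).card = 3 := by
    rw [Finset.card_insert_of_notMem (by simp [hxy, hxz]),
      Finset.card_insert_of_notMem (by simp [hyz]), Finset.card_singleton]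
  have h3 : 3 ≤ (S.filter fun b => o b = o x).card := by
    rw [← hcard]; exact Finset.card_le_card hsub
  have := h (o x)
  omega

/-- The "no three equal" facts extracted from a 4-bus connector. -/
lemma valid4 {α : Type} [DecidableEq α] {o : α → Bool} {a b c d : α}
    (hab : a ≠ b) (hac : a ≠ c) (had : a ≠ d)
    (hbc : b ≠ c) (hbd : b ≠ d) (hcd : c ≠ d)
    (h : ValidConn o ({a, b, c, d} : Finset α)) :
    ¬(o a = o b ∧ o a = o c) ∧ ¬(o a = o b ∧ o a = o d) ∧
    ¬(o a = o c ∧ o a = o d) ∧ ¬(o b = o c ∧ o b = o d) := by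
  refine ⟨three_ne ?_ ?_ ?_ hab hac hbc h, three_ne ?_ ?_ ?_ hab had hbd h,
    three_ne ?_ ?_ ?_ hac had hcd h, three_ne ?_ ?_ ?_ hbc hbd hcd h⟩ <;> simp

/-- The perp-gadget lemma, at the Boolean level: connectors
{a,b,c,d}, {a,b,c,e}, {a,b,d,e} force c = d = e = !a. -/
lemma G5 : ∀ a b c d e : Bool,
    (¬(a = b ∧ a = c) ∧ ¬(a = b ∧ a = d) ∧ ¬(a = c ∧ a = d) ∧ ¬(b = c ∧ b = d)) →
    (¬(a = b ∧ a = c) ∧ ¬(a = b ∧ a = e) ∧ ¬(a = c ∧ a = e) ∧ ¬(b = c ∧ b = e)) →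
    (¬(a = b ∧ a = d) ∧ ¬(a = b ∧ a = e) ∧ ¬(a = d ∧ a = e) ∧ ¬(b = d ∧ b = e)) →
    c = d ∧ d = e ∧ c = !a := by
  intro a b c d e h1 h2 h3
  cases a <;> cases b <;> cases c <;> cases d <;> cases e <;> simp_all

/-- The flipper-gadget lemma, at the Boolean level: connectors
{a,b,c,e}, {a,b,d,e}, {a,c,d,e} force b = c = !a. -/
lemma H5 : ∀ a b c d e : Bool,
    (¬(a = b ∧ a = c) ∧ ¬(a = b ∧ a = e) ∧ ¬(a = c ∧ a = e) ∧ ¬(b = c ∧ b = e)) →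
    (¬(a = b ∧ a = d) ∧ ¬(a = b ∧ a = e) ∧ ¬(a = d ∧ a = e) ∧ ¬(b = d ∧ b = e)) →
    (¬(a = c ∧ a = d) ∧ ¬(a = c ∧ a = e) ∧ ¬(a = d ∧ a = e) ∧ ¬(c = d ∧ c = e)) →
    b = !a ∧ c = !a := by
  intro a b c d e h1 h2 h3
  cases a <;> cases b <;> cases c <;> cases d <;> cases e <;> simp_all

/-- Facts forced in every validly oriented variable box. -/
lemma box_facts (f : Fin 13 → Bool) (h : ∀ S ∈ boxConns, ValidConn f S) :
    f 2 = !f 0 ∧ f 5 = !f 0 ∧ f 6 = !f 0 ∧ f 9 = f 0 ∧ f 10 = f 0 := by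
  have g1 := valid4 (o := f) (by decide) (by decide) (by decide) (by decide)
    (by decide) (by decide) (h {0,1,2,3} (by simp [boxConns]))
  have g2 := valid4 (o := f) (by decide) (by decide) (by decide) (by decide)
    (by decide) (by decide) (h {0,1,2,4} (by simp [boxConns]))
  have g3 := valid4 (o := f) (by decide) (by decide) (by decide) (by decide)
    (by decide) (by decide) (h {0,1,3,4} (by simp [boxConns]))
  have hperp := G5 (f 0) (f 1) (f 2) (f 3) (f 4) g1 g2 g3
  have a1 := valid4 (o := f) (a := 0) (b := 5) (c := 6) (d := 8) (by decide)
    (by decide) (by decide) (by decide) (by decide) (by decide)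
    (h {0,5,6,8} (by simp [boxConns]))
  have a2 := valid4 (o := f) (a := 0) (b := 5) (c := 7) (d := 8) (by decide)
    (by decide) (by decide) (by decide) (by decide) (by decide)
    (h {0,5,7,8} (by simp [boxConns]))
  have a3 := valid4 (o := f) (a := 0) (b := 6) (c := 7) (d := 8) (by decide)
    (by decide) (by decide) (by decide) (by decide) (by decide)
    (h {0,6,7,8} (by simp [boxConns]))
  have hA := H5 (f 0) (f 5) (f 6) (f 7) (f 8) a1 a2 a3
  have b1 := valid4 (o := f) (a := 2) (b := 9) (c := 10) (d := 12) (by decide)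
    (by decide) (by decide) (by decide) (by decide) (by decide)
    (h {2,9,10,12} (by simp [boxConns]))
  have b2 := valid4 (o := f) (a := 2) (b := 9) (c := 11) (d := 12) (by decide)
    (by decide) (by decide) (by decide) (by decide) (by decide)
    (h {2,9,11,12} (by simp [boxConns]))
  have b3 := valid4 (o := f) (a := 2) (b := 10) (c := 11) (d := 12) (by decide)
    (by decide) (by decide) (by decide) (by decide) (by decide)
    (h {2,10,11,12} (by simp [boxConns]))
  have hB := H5 (f 2) (f 9) (f 10) (f 11) (f 12) b1 b2 b3
  refine ⟨hperp.2.2, hA.1, hA.2, ?_, ?_⟩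
  · rw [hB.1, hperp.2.2, Bool.not_not]
  · rw [hB.2, hperp.2.2, Bool.not_not]

/-- Facts forced in every validly oriented (I,O)-chain: O has the same
orientation as I. -/
lemma chain_fact (f : Fin 20 → Bool) (h : ∀ S ∈ chainConns, ValidConn f S) :
    f 17 = f 2 := by
  have g1 := valid4 (o := f) (a := 0) (b := 1) (c := 2) (d := 3) (by decide)
    (by decide) (by decide) (by decide) (by decide) (by decide)
    (h {0,1,2,3} (by simp [chainConns]))
  have g2 := valid4 (o := f) (a := 0) (b := 1) (c := 2) (d := 4) (by decide)
    (by decide) (by decide) (by decide) (by decide) (by decide)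
    (h {0,1,2,4} (by simp [chainConns]))
  have g3 := valid4 (o := f) (a := 0) (b := 1) (c := 3) (d := 4) (by decide)
    (by decide) (by decide) (by decide) (by decide) (by decide)
    (h {0,1,3,4} (by simp [chainConns]))
  have e1 : f 2 = f 3 := (G5 (f 0) (f 1) (f 2) (f 3) (f 4) g1 g2 g3).1
  have e2 : ¬(f 2 = f 3 ∧ f 2 = f 7) :=
    three_ne (x := (2 : Fin 20)) (y := 3) (z := 7) (by simp) (by simp) (by simp)
      (by decide) (by decide) (by decide) (h {2,3,7} (by simp [chainConns]))
  have g4 := valid4 (o := f) (a := 5) (b := 6) (c := 7) (d := 8) (by decide)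
    (by decide) (by decide) (by decide) (by decide) (by decide)
    (h {5,6,7,8} (by simp [chainConns]))
  have g5 := valid4 (o := f) (a := 5) (b := 6) (c := 7) (d := 9) (by decide)
    (by decide) (by decide) (by decide) (by decide) (by decide)
    (h {5,6,7,9} (by simp [chainConns]))
  have g6 := valid4 (o := f) (a := 5) (b := 6) (c := 8) (d := 9) (by decide)
    (by decide) (by decide) (by decide) (by decide) (by decide)
    (h {5,6,8,9} (by simp [chainConns]))
  have e3 : f 7 = f 8 := (G5 (f 5) (f 6) (f 7) (f 8) (f 9) g4 g5 g6).1
  have e4 : ¬(f 7 = f 8 ∧ f 7 = f 12) :=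
    three_ne (x := (7 : Fin 20)) (y := 8) (z := 12) (by simp) (by simp) (by simp)
      (by decide) (by decide) (by decide) (h {7,8,12} (by simp [chainConns]))
  have g7 := valid4 (o := f) (a := 10) (b := 11) (c := 12) (d := 13) (by decide)
    (by decide) (by decide) (by decide) (by decide) (by decide)
    (h {10,11,12,13} (by simp [chainConns]))
  have g8 := valid4 (o := f) (a := 10) (b := 11) (c := 12) (d := 14) (by decide)
    (by decide) (by decide) (by decide) (by decide) (by decide)
    (h {10,11,12,14} (by simp [chainConns]))
  have g9 := valid4 (o := f) (a := 10) (b := 11) (c := 13) (d := 14) (by decide)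
    (by decide) (by decide) (by decide) (by decide) (by decide)
    (h {10,11,13,14} (by simp [chainConns]))
  have e5 : f 12 = f 13 := (G5 (f 10) (f 11) (f 12) (f 13) (f 14) g7 g8 g9).1
  have e6 : ¬(f 12 = f 13 ∧ f 12 = f 15) :=
    three_ne (x := (12 : Fin 20)) (y := 13) (z := 15) (by simp) (by simp) (by simp)
      (by decide) (by decide) (by decide) (h {12,13,15} (by simp [chainConns]))
  have g10 := valid4 (o := f) (a := 15) (b := 16) (c := 17) (d := 18) (by decide)
    (by decide) (by decide) (by decide) (by decide) (by decide)
    (h {15,16,17,18} (by simp [chainConns]))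
  have g11 := valid4 (o := f) (a := 15) (b := 16) (c := 17) (d := 19) (by decide)
    (by decide) (by decide) (by decide) (by decide) (by decide)
    (h {15,16,17,19} (by simp [chainConns]))
  have g12 := valid4 (o := f) (a := 15) (b := 16) (c := 18) (d := 19) (by decide)
    (by decide) (by decide) (by decide) (by decide) (by decide)
    (h {15,16,18,19} (by simp [chainConns]))
  have e7 : f 17 = !f 15 := (G5 (f 15) (f 16) (f 17) (f 18) (f 19) g10 g11 g12).2.2
  have p1 : f 2 ≠ f 7 := fun hh => e2 ⟨e1, hh⟩
  have p2 : f 7 ≠ f 12 := fun hh => e4 ⟨e3, hh⟩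
  have p3 : f 12 ≠ f 15 := fun hh => e6 ⟨e5, hh⟩
  clear h g1 g2 g3 g4 g5 g6 g7 g8 g9 g10 g11 g12 e1 e2 e3 e4 e5 e6
  revert p1 p2 p3 e7
  cases f 2 <;> cases f 7 <;> cases f 12 <;> cases f 15 <;> cases f 17 <;>
    simp

lemma occ_fact : ∀ r s i x : Bool, r = !x → s = !x → ¬(r = s ∧ r = i) →
    i = x := by
  intro r s i x h1 h2 h3
  cases r <;> cases s <;> cases i <;> cases x <;> tauto

lemma nae3 : ∀ a b c : Bool, ¬(a = b ∧ a = c) →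
    (a = true ∨ b = true ∨ c = true) ∧ (a = false ∨ b = false ∨ c = false) := by
  intro a b c h
  cases a <;> cases b <;> cases c <;> tauto

theorem busgraph_orientation_gives_NAE {n m : ℕ}
    (clauses : Fin m → (Fin n × Bool) × (Fin n × Bool) × (Fin n × Bool))
    (lit : Fin m → Fin 3 → Fin n × Bool)
    (hlit : ∀ q, lit q = ![(clauses q).1, (clauses q).2.1, (clauses q).2.2])
    (o : (Fin n × Fin 13) ⊕ (Fin m × Fin 3 × Fin 20) → Bool)
    (hbox : ∀ i : Fin n, ∀ S ∈ boxConns,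
      ValidConn (fun j => o (Sum.inl (i, j))) S)
    (hchain : ∀ (q : Fin m) (μ : Fin 3), ∀ S ∈ chainConns,
      ValidConn (fun j => o (Sum.inr (q, μ, j))) S)
    (hocc : ∀ (q : Fin m) (μ : Fin 3),
      ValidConn o
        {Sum.inl ((lit q μ).1, if (lit q μ).2 then (5 : Fin 13) else 9),
         Sum.inl ((lit q μ).1, if (lit q μ).2 then (6 : Fin 13) else 10),
         Sum.inr (q, μ, (2 : Fin 20))})
    (hclause : ∀ q : Fin m,
      ValidConn o
        {Sum.inr (q, (0 : Fin 3), (17 : Fin 20)),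
         Sum.inr (q, 1, 17), Sum.inr (q, 2, 17)}) :
    ∀ q : Fin m,
      (∃ μ : Fin 3, (if (lit q μ).2 then o (Sum.inl ((lit q μ).1, 0))
          else !o (Sum.inl ((lit q μ).1, 0))) = true) ∧
      (∃ μ : Fin 3, (if (lit q μ).2 then o (Sum.inl ((lit q μ).1, 0))
          else !o (Sum.inl ((lit q μ).1, 0))) = false) := by
  intro q
  have key : ∀ μ : Fin 3, o (Sum.inr (q, μ, (17 : Fin 20))) =
      (if (lit q μ).2 then o (Sum.inl ((lit q μ).1, 0))
        else !o (Sum.inl ((lit q μ).1, 0))) := by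
    intro μ
    have hb := box_facts (fun j => o (Sum.inl ((lit q μ).1, j))) (hbox (lit q μ).1)
    have hc := chain_fact (fun j => o (Sum.inr (q, μ, j))) (hchain q μ)
    have ho := hocc q μ
    cases hpol : (lit q μ).2 with
    | true =>
      simp only [hpol, if_true] at ho ⊢
      have h3 := three_ne (x := Sum.inl ((lit q μ).1, (5 : Fin 13)))
        (y := Sum.inl ((lit q μ).1, (6 : Fin 13)))
        (z := Sum.inr (q, μ, (2 : Fin 20)))
        (by simp) (by simp) (by simp) (by simp) (by simp) (by simp) ho
      rw [hc]
      exact occ_fact _ _ _ _ hb.2.1 hb.2.2.1 h3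
    | false =>
      simp only [hpol, if_false] at ho ⊢
      have h3 := three_ne (x := Sum.inl ((lit q μ).1, (9 : Fin 13)))
        (y := Sum.inl ((lit q μ).1, (10 : Fin 13)))
        (z := Sum.inr (q, μ, (2 : Fin 20)))
        (by simp) (by simp) (by simp) (by simp) (by simp) (by simp) ho
      rw [hc]
      have h9 : o (Sum.inl ((lit q μ).1, (9 : Fin 13))) =
          !(!o (Sum.inl ((lit q μ).1, 0))) := by
        rw [hb.2.2.2.1, Bool.not_not]
      have h10 : o (Sum.inl ((lit q μ).1, (10 : Fin 13))) =
          !(!o (Sum.inl ((lit q μ).1, 0))) := by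
        rw [hb.2.2.2.2, Bool.not_not]
      exact occ_fact _ _ _ _ h9 h10 h3
  have hcl := three_ne (x := Sum.inr (q, (0 : Fin 3), (17 : Fin 20)))
    (y := Sum.inr (q, (1 : Fin 3), (17 : Fin 20)))
    (z := Sum.inr (q, (2 : Fin 3), (17 : Fin 20)))
    (by simp) (by simp) (by simp) (by simp) (by simp) (by simp) (hclause q)
  obtain ⟨ht, hf⟩ := nae3 _ _ _ hcl
  constructor
  · rcases ht with h | h | h
    · exact ⟨0, by rw [← key 0]; exact h⟩
    · exact ⟨1, by rw [← key 1]; exact h⟩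
    · exact ⟨2, by rw [← key 2]; exact h⟩
  · rcases hf with h | h | h
    · exact ⟨0, by rw [← key 0]; exact h⟩
    · exact ⟨1, by rw [← key 1]; exact h⟩
    · exact ⟨2, by rw [← key 2]; exact h⟩
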